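/- arXiv:1511.00590 — 7 statements merged into one kernel-verified Lean document; each statement's English description precedes it below -/
import Mathlib

section
/- Define sequences p, p¹, p², p³ : ℕ → ℤ by the initial values p_0 = 1, p¹_0 = 2, p²_0 = 1, p³_0 = 3 and, for n ≥ 1, p_n = 2 p¹_{n-1} + p_{n-1}, p¹_n = p²_n + p³_{n-1}, p²_n = p³_{n-1} + 2 p¹_{n-1}, p³_n = p_n + 2 p³_{n-1}. Then p_0 = 1, p_1 = 5, p_2 = 25 and p_n = 5 p_{n-1} - 4 p_{n-2} + 4 p_{n-3} for all n ≥ 3. -/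
theorem stmt_3 (p p1 p2 p3 : ℕ → ℤ)
    (h0 : p 0 = 1) (h10 : p1 0 = 2) (h20 : p2 0 = 1) (h30 : p3 0 = 3)
    (hp : ∀ n, 1 ≤ n → p n = 2 * p1 (n - 1) + p (n - 1))
    (hp1 : ∀ n, 1 ≤ n → p1 n = p2 n + p3 (n - 1))
    (hp2 : ∀ n, 1 ≤ n → p2 n = p3 (n - 1) + 2 * p1 (n - 1))
    (hp3 : ∀ n, 1 ≤ n → p3 n = p n + 2 * p3 (n - 1)) :
    p 0 = 1 ∧ p 1 = 5 ∧ p 2 = 25 ∧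
      ∀ n, 3 ≤ n → p n = 5 * p (n - 1) - 4 * p (n - 2) + 4 * p (n - 3) := by
  have a1 := hp 1 (by norm_num)
  have b1a := hp1 1 (by norm_num)
  have b1b := hp2 1 (by norm_num)
  have a2 := hp 2 (by norm_num)
  norm_num at a1 b1a b1b a2
  refine ⟨h0, by linarith, by linarith, ?_⟩
  intro n hn
  obtain ⟨m, rfl⟩ : ∃ m, n = m + 3 := ⟨n - 3, by omega⟩
  show p (m+3) = 5 * p (m+2) - 4 * p (m+1) + 4 * p m
  have A := hp (m+3) (by omega)
  have A1 := hp (m+2) (by omega)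
  have A2 := hp (m+1) (by omega)
  have B1a := hp1 (m+2) (by omega)
  have B1b := hp2 (m+2) (by omega)
  have B2a := hp1 (m+1) (by omega)
  have B2b := hp2 (m+1) (by omega)
  have C := hp3 (m+1) (by omega)
  simp only [show m+3-1 = m+2 from rfl, show m+2-1 = m+1 from rfl,
    show m+1-1 = m from rfl] at A A1 A2 B1a B1b B2a B2b C
  linarith
end

section
/- Define sequences m, m¹, m², m³ : ℕ → ℤ by the initial values m_0 = 1, m¹_0 = 2, m²_0 = 1, m³_0 = 3 and, for n ≥ 1, m_n = 2 m¹_{n-1} + m_{n-1}, m²_n = m³_{n-1} + m¹_{n-1} + m²_{n-1} + m_{n-1}, m¹_n = m²_n + m³_{n-1}, m³_n = 2 m³_{n-1} + m¹_{n-1} + m²_{n-1} + m_{n-1} + m²_n. Then m_0 = 1, m_1 = 5, m_2 = 25 and m_n = 6 m_{n-1} - 3 m_{n-2} + 2 m_{n-3} for all n ≥ 3. -/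
theorem stmt_4 (m m1 m2 m3 : ℕ → ℤ)
    (h0 : m 0 = 1) (h10 : m1 0 = 2) (h20 : m2 0 = 1) (h30 : m3 0 = 3)
    (hm : ∀ n, 1 ≤ n → m n = 2 * m1 (n - 1) + m (n - 1))
    (hm2 : ∀ n, 1 ≤ n → m2 n = m3 (n - 1) + m1 (n - 1) + m2 (n - 1) + m (n - 1))
    (hm1 : ∀ n, 1 ≤ n → m1 n = m2 n + m3 (n - 1))
    (hm3 : ∀ n, 1 ≤ n →
      m3 n = 2 * m3 (n - 1) + m1 (n - 1) + m2 (n - 1) + m (n - 1) + m2 n) :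
    m 0 = 1 ∧ m 1 = 5 ∧ m 2 = 25 ∧
      ∀ n, 3 ≤ n → m n = 6 * m (n - 1) - 3 * m (n - 2) + 2 * m (n - 3) := by
  have inv : ∀ n, m3 n = m1 n + m2 n := by
    intro n
    induction n with
    | zero => omega
    | succ k ih =>
      have b := hm2 (k+1) (by omega)
      have c := hm1 (k+1) (by omega)
      have d := hm3 (k+1) (by omega)
      simp only [show k+1-1 = k from rfl] at b c d
      linarith
  have e1 := hm 1 (by norm_num)
  have e2 := hm 2 (by norm_num)
  have f1 := hm2 1 (by norm_num)
  have g1 := hm1 1 (by norm_num)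
  simp only [show (1:ℕ)-1=0 by rfl, show (2:ℕ)-1=1 by rfl] at e1 e2 f1 g1
  refine ⟨h0, by omega, by omega, ?_⟩
  intro n hn
  obtain ⟨k, rfl⟩ : ∃ k, n = k + 3 := ⟨n - 3, by omega⟩
  have a1 := hm (k+1) (by omega)
  have a2 := hm (k+2) (by omega)
  have a3 := hm (k+3) (by omega)
  have b1 := hm2 (k+1) (by omega)
  have b2 := hm2 (k+2) (by omega)
  have b3 := hm2 (k+3) (by omega)
  have c1 := hm1 (k+1) (by omega)
  have c2 := hm1 (k+2) (by omega)
  have d1 := hm3 (k+1) (by omega)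
  have d2 := hm3 (k+2) (by omega)
  simp only [show k+3-1 = k+2 from rfl, show k+3-2 = k+1 from rfl,
    show k+3-3 = k from rfl, show k+2-1 = k+1 from rfl,
    show k+1-1 = k from rfl] at *
  have i0 := inv k
  have i1 := inv (k+1)
  linarith
end

section
/- Define sequences o, o¹, o², o³ : ℕ → ℤ by o_0 = 1, o¹_0 = 2, o²_0 = 1, o²_1 = 7, o³_0 = 3 and, for n in the appropriate range, o_n = 2 o¹_{n-1} + o_{n-1} (n ≥ 1), o²_n = o³_{n-1} + o²_{n-1} + o_{n-1} + 2 o³_{n-2} (n ≥ 2), o¹_n = o²_n + o³_{n-1} (n ≥ 1), o³_n = o_n + o³_{n-1} + o²_n (n ≥ 1). Then o_0 = 1, o_1 = 5, o_2 = 25 and o_n = 4 o_{n-1} + 4 o_{n-2} + o_{n-3} for all n ≥ 3. -/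
theorem stmt_5 (o o1 o2 o3 : ℕ → ℤ)
    (h0 : o 0 = 1) (h10 : o1 0 = 2) (h20 : o2 0 = 1) (h21 : o2 1 = 7) (h30 : o3 0 = 3)
    (ho : ∀ n, 1 ≤ n → o n = 2 * o1 (n - 1) + o (n - 1))
    (ho2 : ∀ n, 2 ≤ n → o2 n = o3 (n - 1) + o2 (n - 1) + o (n - 1) + 2 * o3 (n - 2))
    (ho1 : ∀ n, 1 ≤ n → o1 n = o2 n + o3 (n - 1))
    (ho3 : ∀ n, 1 ≤ n → o3 n = o n + o3 (n - 1) + o2 n) :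
    o 0 = 1 ∧ o 1 = 5 ∧ o 2 = 25 ∧
      ∀ n, 3 ≤ n → o n = 4 * o (n - 1) + 4 * o (n - 2) + o (n - 3) := by
  have key1 : ∀ k, o1 k = o3 k - o k := by
    intro k
    cases k with
    | zero => rw [h10, h30, h0]; norm_num
    | succ m =>
      have e1 := ho1 (m + 1) (by omega)
      have e2 := ho3 (m + 1) (by omega)
      simp only [Nat.add_sub_cancel] at e1 e2
      linarith
  have key : ∀ k, 2 * o3 k = o (k + 1) + o k := by
    intro k
    have e := ho (k + 1) (by omega)
    simp only [Nat.add_sub_cancel] at e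
    have := key1 k
    linarith
  have h1 : o 1 = 5 := by
    have e := ho 1 (by omega)
    norm_num at e
    rw [h10, h0] at e; linarith
  have h2 : o 2 = 25 := by
    have e := key 1
    have e2 := ho3 1 (by omega)
    norm_num at e2
    rw [h1, h30, h21] at e2
    norm_num at e
    linarith
  refine ⟨h0, h1, h2, ?_⟩
  intro n hn
  obtain ⟨m, rfl⟩ : ∃ m, n = m + 3 := ⟨n - 3, by omega⟩
  have hs1 : m + 3 - 1 = m + 2 := by omega
  have hs2 : m + 3 - 2 = m + 1 := by omega
  have hs3 : m + 3 - 3 = m := by omega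
  rw [hs1, hs2, hs3]
  have k1 := key (m + 2)
  have k2 := key (m + 1)
  have k3 := key m
  have e1 := ho3 (m + 2) (by omega)
  have e2 := ho2 (m + 2) (by omega)
  have e3 := ho3 (m + 1) (by omega)
  simp only [Nat.add_sub_cancel, show m + 2 - 1 = m + 1 from by omega,
    show m + 2 - 2 = m from by omega] at e1 e2 e3
  linarith
end

section
/- Let p, m, o : ℕ → ℤ be defined by p_0 = m_0 = o_0 = 1, p_1 = m_1 = o_1 = 5, p_2 = m_2 = o_2 = 25, and for n ≥ 3: p_n = 5 p_{n-1} - 4 p_{n-2} + 4 p_{n-3}, o_n = 4 o_{n-1} + 4 o_{n-2} + o_{n-3}, m_n = 6 m_{n-1} - 3 m_{n-2} + 2 m_{n-3}. Then for all n, p_n ≤ o_n ≤ m_n. -/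
theorem stmt_9 (p m o : ℕ → ℤ)
    (hp0 : p 0 = 1) (hp1 : p 1 = 5) (hp2 : p 2 = 25)
    (hm0 : m 0 = 1) (hm1 : m 1 = 5) (hm2 : m 2 = 25)
    (ho0 : o 0 = 1) (ho1 : o 1 = 5) (ho2 : o 2 = 25)
    (hp : ∀ n, 3 ≤ n → p n = 5 * p (n - 1) - 4 * p (n - 2) + 4 * p (n - 3))
    (ho : ∀ n, 3 ≤ n → o n = 4 * o (n - 1) + 4 * o (n - 2) + o (n - 3))
    (hm : ∀ n, 3 ≤ n → m n = 6 * m (n - 1) - 3 * m (n - 2) + 2 * m (n - 3)) :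
    ∀ n, p n ≤ o n ∧ o n ≤ m n := by
  have key : ∀ n : ℕ,
      (0 < p n ∧ 0 < o n ∧ 0 < m n ∧ p n ≤ o n ∧ o n ≤ m n) ∧
      (0 < p (n+1) ∧ 0 < o (n+1) ∧ 0 < m (n+1) ∧ p (n+1) ≤ o (n+1) ∧ o (n+1) ≤ m (n+1)) ∧
      (0 < p (n+2) ∧ 0 < o (n+2) ∧ 0 < m (n+2) ∧ p (n+2) ≤ o (n+2) ∧ o (n+2) ≤ m (n+2)) ∧
      (4*p n ≤ p (n+1) ∧ p (n+1) ≤ 5*p n ∧ 9*o n ≤ 2*o (n+1) ∧ o (n+1) ≤ 5*o n ∧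
        5*m n ≤ m (n+1)) ∧
      (4*p (n+1) ≤ p (n+2) ∧ p (n+2) ≤ 5*p (n+1) ∧ 9*o (n+1) ≤ 2*o (n+2) ∧
        o (n+2) ≤ 5*o (n+1) ∧ 5*m (n+1) ≤ m (n+2)) := by
    intro n
    induction n with
    | zero =>
      refine ⟨⟨?_, ?_, ?_, ?_, ?_⟩, ⟨?_, ?_, ?_, ?_, ?_⟩, ⟨?_, ?_, ?_, ?_, ?_⟩,
        ⟨?_, ?_, ?_, ?_, ?_⟩, ⟨?_, ?_, ?_, ?_, ?_⟩⟩ <;>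
        simp [hp0, hp1, hp2, ho0, ho1, ho2, hm0, hm1, hm2]
    | succ n ih =>
      obtain ⟨⟨P0, O0, M0, PO0, OM0⟩, B1, ⟨P2, O2, M2, PO2, OM2⟩,
        ⟨E0, U0, C0, D0, F0⟩, ⟨E1, U1, C1, D1, F1⟩⟩ := ih
      obtain ⟨P1, O1, M1, PO1, OM1⟩ := B1
      have hp3 : p (n+3) = 5 * p (n+2) - 4 * p (n+1) + 4 * p n := hp (n+3) (by omega)
      have ho3 : o (n+3) = 4 * o (n+2) + 4 * o (n+1) + o n := ho (n+3) (by omega)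
      have hm3 : m (n+3) = 6 * m (n+2) - 3 * m (n+1) + 2 * m n := hm (n+3) (by omega)
      have E2 : 4 * p (n+2) ≤ p (n+3) := by linarith
      have U2 : p (n+3) ≤ 5 * p (n+2) := by linarith
      have C2 : 9 * o (n+2) ≤ 2 * o (n+3) := by linarith
      have D2 : o (n+3) ≤ 5 * o (n+2) := by linarith
      have F2 : 5 * m (n+2) ≤ m (n+3) := by linarith
      have P3 : 0 < p (n+3) := by linarith
      have PO3 : p (n+3) ≤ o (n+3) := by linarith
      have OM3 : o (n+3) ≤ m (n+3) := by linarith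
      exact ⟨⟨P1, O1, M1, PO1, OM1⟩, ⟨P2, O2, M2, PO2, OM2⟩,
        ⟨P3, by linarith, by linarith, PO3, OM3⟩,
        ⟨E1, U1, C1, D1, F1⟩, ⟨E2, U2, C2, D2, F2⟩⟩
  intro n
  obtain ⟨⟨_, _, _, h1, h2⟩, _⟩ := key n
  exact ⟨h1, h2⟩
end

section
/- Let (z_n) be defined by z_0 = 1, z_1 = 5, z_2 = 20, z_3 = 75, z_4 = 288, z_5 = 1105, z_6 = 4234 and z_n = 3 z_{n-1} + z_{n-2} + 6 z_{n-3} + 7 z_{n-4} + 7 z_{n-5} + 5 z_{n-6} + z_{n-7} for n ≥ 7. Then (1 - 3x - x^2 - 6x^3 - 7x^4 - 7x^5 - 5x^6 - x^7) · (Σ_{n≥0} z_n x^n) = 1 + 2x + 4x^2 + 4x^3 + 6x^4 + 4x^5 + x^6 as formal power series over ℤ. -/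
open PowerSeries

theorem stmt_14 (z : ℕ → ℤ)
    (h0 : z 0 = 1) (h1 : z 1 = 5) (h2 : z 2 = 20) (h3 : z 3 = 75) (h4 : z 4 = 288)
    (h5 : z 5 = 1105) (h6 : z 6 = 4234)
    (hrec : ∀ n, 7 ≤ n → z n = 3 * z (n - 1) + z (n - 2) + 6 * z (n - 3)
      + 7 * z (n - 4) + 7 * z (n - 5) + 5 * z (n - 6) + z (n - 7)) :
    (1 - 3 * X - X ^ 2 - 6 * X ^ 3 - 7 * X ^ 4 - 7 * X ^ 5 - 5 * X ^ 6 - X ^ 7 :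
        PowerSeries ℤ) * PowerSeries.mk z
      = 1 + 2 * X + 4 * X ^ 2 + 4 * X ^ 3 + 6 * X ^ 4 + 4 * X ^ 5 + X ^ 6 := by
  have key : (1 - 3 * X - X ^ 2 - 6 * X ^ 3 - 7 * X ^ 4 - 7 * X ^ 5 - 5 * X ^ 6 - X ^ 7 :
      PowerSeries ℤ) * PowerSeries.mk z
      = PowerSeries.mk z - C (R := ℤ) 3 * (PowerSeries.mk z * X ^ 1) - C (R := ℤ) 1 * (PowerSeries.mk z * X ^ 2)
        - C (R := ℤ) 6 * (PowerSeries.mk z * X ^ 3) - C (R := ℤ) 7 * (PowerSeries.mk z * X ^ 4)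
        - C (R := ℤ) 7 * (PowerSeries.mk z * X ^ 5) - C (R := ℤ) 5 * (PowerSeries.mk z * X ^ 6)
        - C (R := ℤ) 1 * (PowerSeries.mk z * X ^ 7) := by
    simp only [map_ofNat, map_one]; ring
  have key2 : (1 + 2 * X + 4 * X ^ 2 + 4 * X ^ 3 + 6 * X ^ 4 + 4 * X ^ 5 + X ^ 6 :
      PowerSeries ℤ)
      = 1 + C (R := ℤ) 2 * X ^ 1 + C (R := ℤ) 4 * X ^ 2 + C (R := ℤ) 4 * X ^ 3 + C (R := ℤ) 6 * X ^ 4 + C (R := ℤ) 4 * X ^ 5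
        + C (R := ℤ) 1 * X ^ 6 := by
    simp only [map_ofNat, map_one]; ring
  rw [key, key2]
  ext n
  simp only [map_sub, map_add, coeff_C_mul, coeff_mul_X_pow', coeff_mk,
    PowerSeries.coeff_one, coeff_X_pow, PowerSeries.coeff_C, one_mul]
  rcases Nat.lt_or_ge n 7 with h | h
  · interval_cases n <;> simp_all
  · have e0 : ¬ n = 0 := by omega
    have e6 : ¬ n = 6 := by omega
    have h1' : 1 ≤ n := by omega
    have h2' : 2 ≤ n := by omega
    have h3' : 3 ≤ n := by omega
    have h4' : 4 ≤ n := by omega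
    have h5' : 5 ≤ n := by omega
    have h6' : 6 ≤ n := by omega
    simp only [if_pos h, if_pos h1', if_pos h2', if_pos h3', if_pos h4', if_pos h5',
      if_pos h6', if_neg e0, if_neg e6]
    have := hrec n h
    have f1 : ¬ n - 1 = 0 := by omega
    have f5 : ¬ n - 5 = 0 := by omega
    have f2 : ¬ n - 2 = 0 := by omega
    have f3 : ¬ n - 3 = 0 := by omega
    have f4 : ¬ n - 4 = 0 := by omega
    have f6 : ¬ n - 6 = 0 := by omega
    simp only [if_neg f1, if_neg f2, if_neg f3, if_neg f4, if_neg f5, if_neg f6]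
    linarith
end

section
/- Let (h_n) be defined by h_0 = 1, h_1 = 5, h_2 = 20, h_3 = 75, h_4 = 288, h_5 = 1094, h_6 = 4171 and h_n = h_{n-1} + 7 h_{n-2} + 12 h_{n-3} + 6 h_{n-4} + 7 h_{n-5} + 4 h_{n-6} + 2 h_{n-7} for n ≥ 7. Then (1 - x - 7x^2 - 12x^3 - 6x^4 - 7x^5 - 4x^6 - 2x^7) · (Σ_{n≥0} h_n x^n) = 1 + 4x + 8x^2 + 8x^3 + 7x^4 + 4x^5 + 2x^6 as formal power series over ℤ. -/
open PowerSeries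

theorem stmt_15 (h : ℕ → ℤ)
    (h0 : h 0 = 1) (h1 : h 1 = 5) (h2 : h 2 = 20) (h3 : h 3 = 75) (h4 : h 4 = 288)
    (h5 : h 5 = 1094) (h6 : h 6 = 4171)
    (hrec : ∀ n, 7 ≤ n → h n = h (n - 1) + 7 * h (n - 2) + 12 * h (n - 3)
      + 6 * h (n - 4) + 7 * h (n - 5) + 4 * h (n - 6) + 2 * h (n - 7)) :
    (1 - X - 7 * X ^ 2 - 12 * X ^ 3 - 6 * X ^ 4 - 7 * X ^ 5 - 4 * X ^ 6 - 2 * X ^ 7 :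
        PowerSeries ℤ) * PowerSeries.mk h
      = 1 + 4 * X + 8 * X ^ 2 + 8 * X ^ 3 + 7 * X ^ 4 + 4 * X ^ 5 + 2 * X ^ 6 := by
  rw [show (7:ℤ⟦X⟧) = C 7 from (map_ofNat _ _).symm,
      show (12:ℤ⟦X⟧) = C 12 from (map_ofNat _ _).symm,
      show (6:ℤ⟦X⟧) = C 6 from (map_ofNat _ _).symm,
      show (4:ℤ⟦X⟧) = C 4 from (map_ofNat _ _).symm,
      show (2:ℤ⟦X⟧) = C 2 from (map_ofNat _ _).symm,
      show (8:ℤ⟦X⟧) = C 8 from (map_ofNat _ _).symm]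
  apply PowerSeries.ext; intro n
  have key : ∀ k, (coeff n) (X ^ k * mk h) = if k ≤ n then h (n - k) else 0 := by
    intro k; rw [coeff_X_pow_mul', coeff_mk]
  have k1 : (coeff n) (X * mk h) = if 1 ≤ n then h (n - 1) else 0 := by
    rw [← pow_one (X : PowerSeries ℤ)]; exact key 1
  simp only [sub_mul, add_mul, one_mul, map_sub, map_add, mul_assoc, map_mul,
    coeff_C_mul, coeff_mk, key, k1, map_one, map_pow, coeff_one, coeff_X,
    PowerSeries.coeff_X_pow]
  by_cases hn : n ≤ 6
  · interval_cases n <;> simp_all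
  · have hn7 : 7 ≤ n := by omega
    have := hrec n hn7
    have c1 : 1 ≤ n := by omega
    have c2 : 2 ≤ n := by omega
    have c3 : 3 ≤ n := by omega
    have c4 : 4 ≤ n := by omega
    have c5 : 5 ≤ n := by omega
    have c6 : 6 ≤ n := by omega
    have c7 : 7 ≤ n := by omega
    have e0 : n ≠ 0 := by omega
    have e1 : n ≠ 1 := by omega
    have e2 : n ≠ 2 := by omega
    have e3 : n ≠ 3 := by omega
    have e4 : n ≠ 4 := by omega
    have e5 : n ≠ 5 := by omega
    have e6 : n ≠ 6 := by omega
    simp only [if_pos c1, if_pos c2, if_pos c3, if_pos c4, if_pos c5, if_pos c6, if_pos c7,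
      if_neg e0, if_neg e1, if_neg e2, if_neg e3, if_neg e4, if_neg e5, if_neg e6]
    linarith
end

section
/- Let (ℓ_n) and (z_n) be the integer sequences defined by ℓ_0 = 1, ℓ_1 = 5, ℓ_2 = 20, ℓ_3 = 79, ℓ_4 = 317, ℓ_n = 4 ℓ_{n-1} + ℓ_{n-4} + ℓ_{n-5} (n ≥ 5), and z_0 = 1, z_1 = 5, z_2 = 20, z_3 = 75, z_4 = 288, z_5 = 1105, z_6 = 4234, z_n = 3 z_{n-1} + z_{n-2} + 6 z_{n-3} + 7 z_{n-4} + 7 z_{n-5} + 5 z_{n-6} + z_{n-7} (n ≥ 7). Then z_n ≤ ℓ_n for all n. -/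
theorem stmt_16 (l z : ℕ → ℤ)
    (hl0 : l 0 = 1) (hl1 : l 1 = 5) (hl2 : l 2 = 20) (hl3 : l 3 = 79) (hl4 : l 4 = 317)
    (hlrec : ∀ n, 5 ≤ n → l n = 4 * l (n - 1) + l (n - 4) + l (n - 5))
    (hz0 : z 0 = 1) (hz1 : z 1 = 5) (hz2 : z 2 = 20) (hz3 : z 3 = 75) (hz4 : z 4 = 288)
    (hz5 : z 5 = 1105) (hz6 : z 6 = 4234)
    (hzrec : ∀ n, 7 ≤ n → z n = 3 * z (n - 1) + z (n - 2) + 6 * z (n - 3)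
      + 7 * z (n - 4) + 7 * z (n - 5) + 5 * z (n - 6) + z (n - 7)) :
    ∀ n, z n ≤ l n := by
  -- compute l 5 and l 6
  have hl5 : l 5 = 1274 := by
    have h := hlrec 5 (le_refl 5)
    norm_num at h
    rw [h, hl4, hl1, hl0]; norm_num
  have hl6 : l 6 = 5121 := by
    have h := hlrec 6 (by norm_num)
    norm_num at h
    rw [h, hl5, hl2, hl1]; norm_num
  -- positivity of l
  have hlpos : ∀ n, 0 < l n := by
    intro n
    induction n using Nat.strong_induction_on with
    | _ n ih =>
      match n with
      | 0 => rw [hl0]; norm_num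
      | 1 => rw [hl1]; norm_num
      | 2 => rw [hl2]; norm_num
      | 3 => rw [hl3]; norm_num
      | 4 => rw [hl4]; norm_num
      | (m+5) =>
        have h := hlrec (m+5) (by omega)
        have e1 : m + 5 - 1 = m + 4 := by omega
        have e4 : m + 5 - 4 = m + 1 := by omega
        have e5 : m + 5 - 5 = m := by omega
        rw [e1, e4, e5] at h
        have p1 := ih (m+4) (by omega)
        have p2 := ih (m+1) (by omega)
        have p3 := ih m (by omega)
        rw [h]; linarith
  -- growth facts for z
  have hzstep : ∀ n, 0 < z n ∧ 7 * z n ≤ 2 * z (n+1) ∧ (1 ≤ n → z (n+1) ≤ 4 * z n) := by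
    intro n
    induction n using Nat.strong_induction_on with
    | _ n ih =>
      match n with
      | 0 => rw [show (0:ℕ)+1 = 1 from rfl, hz0, hz1]; norm_num
      | 1 => rw [show (1:ℕ)+1 = 2 from rfl, hz1, hz2]; norm_num
      | 2 => rw [show (2:ℕ)+1 = 3 from rfl, hz2, hz3]; norm_num
      | 3 => rw [show (3:ℕ)+1 = 4 from rfl, hz3, hz4]; norm_num
      | 4 => rw [show (4:ℕ)+1 = 5 from rfl, hz4, hz5]; norm_num
      | 5 => rw [show (5:ℕ)+1 = 6 from rfl, hz5, hz6]; norm_num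
      | (m+6) =>
        obtain ⟨p0, g0, _⟩ := ih m (by omega)
        obtain ⟨p1, g1, _⟩ := ih (m+1) (by omega)
        obtain ⟨p2, g2, _⟩ := ih (m+2) (by omega)
        obtain ⟨p3, g3, u3⟩ := ih (m+3) (by omega)
        obtain ⟨p4, g4, u4⟩ := ih (m+4) (by omega)
        obtain ⟨p5, g5, u5⟩ := ih (m+5) (by omega)
        have u4' := u4 (by omega)
        have u5' := u5 (by omega)
        have h := hzrec (m+7) (by omega)
        have e1 : m + 7 - 1 = m + 6 := by omega
        have e2 : m + 7 - 2 = m + 5 := by omega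
        have e3 : m + 7 - 3 = m + 4 := by omega
        have e4 : m + 7 - 4 = m + 3 := by omega
        have e5 : m + 7 - 5 = m + 2 := by omega
        have e6 : m + 7 - 6 = m + 1 := by omega
        have e7 : m + 7 - 7 = m := by omega
        rw [e1, e2, e3, e4, e5, e6, e7] at h
        have p6 : 0 < z (m+6) := by linarith
        have e8 : m + 6 + 1 = m + 7 := by omega
        refine ⟨p6, ?_, ?_⟩
        · rw [e8, h]; linarith
        · intro _; rw [e8, h]; linarith
  -- main strong induction
  intro n
  induction n using Nat.strong_induction_on with
  | _ n ih =>
    match n with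
    | 0 => rw [hz0, hl0]
    | 1 => rw [hz1, hl1]
    | 2 => rw [hz2, hl2]
    | 3 => rw [hz3, hl3]; norm_num
    | 4 => rw [hz4, hl4]; norm_num
    | 5 => rw [hz5, hl5]; norm_num
    | 6 => rw [hz6, hl6]; norm_num
    | (m+7) =>
      obtain ⟨p6, _, u6⟩ := hzstep (m+6)
      have u6' := u6 (by omega)
      have e8 : m + 6 + 1 = m + 7 := by omega
      rw [e8] at u6'
      have hle := ih (m+6) (by omega)
      have h := hlrec (m+7) (by omega)
      have e1 : m + 7 - 1 = m + 6 := by omega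
      have e4 : m + 7 - 4 = m + 3 := by omega
      have e5 : m + 7 - 5 = m + 2 := by omega
      rw [e1, e4, e5] at h
      have q1 := hlpos (m+3)
      have q2 := hlpos (m+2)
      rw [h]; linarith
end
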